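/- Let d ≥ 1 be an integer and p ≥ 1 a real number. Let g be a measurable function on (0, 1/e) and define the radial function u on B_{1/e} ⊆ ℝ^d by u(x) = g(|x|). Then there exists a constant C_d > 0 depending only on d such that I_{1,p}(u, B_{1/e}) ≤ C_d ∬_{{(r_1, r_2) ∈ (0,1/e)² : |g(r_1) - g(r_2)| > 1}} r_1^{d-1} r_2^{d-1} / |r_1 - r_2|^{p+d} dr_1 dr_2. -/

import Mathlib

open MeasureTheory Real Filter ENNReal
open Set Metric

noncomputable def nlI (d : ℕ) (p δ : ℝ) (u : EuclideanSpace ℝ (Fin d) → ℝ)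
    (O : Set (EuclideanSpace ℝ (Fin d))) : ℝ≥0∞ :=
  ∫⁻ x in O, ∫⁻ y in O,
    (if δ < |u x - u y| then ENNReal.ofReal (δ ^ p / ‖x - y‖ ^ ((d : ℝ) + p)) else 0)

lemma lintegral_fun_norm_aux {E : Type*} [NormedAddCommGroup E] [NormedSpace ℝ E]
    [MeasurableSpace E] [BorelSpace E] [Nontrivial E] [FiniteDimensional ℝ E]
    (μ : Measure E) [μ.IsAddHaarMeasure] (f : ℝ → ℝ≥0∞) (hf : Measurable f) :
    ∫⁻ x, f ‖x‖ ∂μ = μ.toSphere Set.univ *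
      ∫⁻ y in Set.Ioi (0:ℝ), ENNReal.ofReal (y ^ (Module.finrank ℝ E - 1)) * f y := by
  have hmeas : Measurable (fun p : sphere (0:E) 1 × Set.Ioi (0:ℝ) => f p.2.1) :=
    hf.comp (measurable_subtype_coe.comp measurable_snd)
  have h1 : ∫⁻ x : ({(0:E)}ᶜ : Set E), f ‖x.1‖ ∂(μ.comap (↑)) = ∫⁻ x, f ‖x‖ ∂μ := by
    rw [lintegral_subtype_comap (measurableSet_singleton _).compl (fun x => f ‖x‖),
      MeasureTheory.restrict_compl_singleton]
  have h2 := (μ.measurePreserving_homeomorphUnitSphereProd).lintegral_comp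
    (f := fun p : sphere (0:E) 1 × Set.Ioi (0:ℝ) => f p.2.1) hmeas
  have h2' : ∫⁻ x : ({(0:E)}ᶜ : Set E), f ‖x.1‖ ∂(μ.comap (↑)) =
      ∫⁻ p : sphere (0:E) 1 × Set.Ioi (0:ℝ), f p.2.1
        ∂(μ.toSphere.prod (.volumeIoiPow (Module.finrank ℝ E - 1))) := by
    simpa only [homeomorphUnitSphereProd_apply_snd_coe] using h2
  have h3 : ∫⁻ p : sphere (0:E) 1 × Set.Ioi (0:ℝ), f p.2.1
        ∂(μ.toSphere.prod (.volumeIoiPow (Module.finrank ℝ E - 1))) =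
      μ.toSphere Set.univ * ∫⁻ y : Set.Ioi (0:ℝ), f y.1
        ∂(Measure.volumeIoiPow (Module.finrank ℝ E - 1)) := by
    rw [MeasureTheory.lintegral_prod (fun p : sphere (0:E) 1 × Set.Ioi (0:ℝ) => f p.2.1)
      hmeas.aemeasurable]
    simp [lintegral_const, mul_comm]
  have h4 : ∫⁻ y : Set.Ioi (0:ℝ), f y.1
        ∂(Measure.volumeIoiPow (Module.finrank ℝ E - 1)) =
      ∫⁻ y in Set.Ioi (0:ℝ), ENNReal.ofReal (y ^ (Module.finrank ℝ E - 1)) * f y := by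
    rw [Measure.volumeIoiPow, lintegral_withDensity_eq_lintegral_mul _
      ((measurable_subtype_coe.pow_const _).ennreal_ofReal)
      (g := fun y : Set.Ioi (0:ℝ) => f y.1) (hf.comp measurable_subtype_coe)]
    exact lintegral_subtype_comap measurableSet_Ioi
      (fun y : ℝ => ENNReal.ofReal (y ^ (Module.finrank ℝ E - 1)) * f y)
  rw [← h1, h2', h3, h4]

noncomputable def auxF (g : ℝ → ℝ) (d : ℕ) (p : ℝ) (r s : ℝ) : ℝ≥0∞ :=
  if 1 < |g r - g s| then ENNReal.ofReal (1 / |r - s| ^ ((d : ℝ) + p)) else 0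

/-- reduction of the nonlocal energy of a radial function to a 1D integral. -/
theorem stmt17 (d : ℕ) (hd : 1 ≤ d) :
    ∃ C : ℝ, 0 < C ∧ ∀ p : ℝ, 1 ≤ p → ∀ g : ℝ → ℝ, Measurable g →
      nlI d p 1 (fun x => g ‖x‖)
          (Metric.ball (0 : EuclideanSpace ℝ (Fin d)) (1 / Real.exp 1)) ≤
        ENNReal.ofReal C *
          ∫⁻ r₁ in Set.Ioo (0 : ℝ) (1 / Real.exp 1),
            ∫⁻ r₂ in Set.Ioo (0 : ℝ) (1 / Real.exp 1),
              (if 1 < |g r₁ - g r₂| then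
                ENNReal.ofReal
                  (r₁ ^ ((d : ℝ) - 1) * r₂ ^ ((d : ℝ) - 1) / |r₁ - r₂| ^ (p + d)) else 0) := by
  haveI : Nonempty (Fin d) := Fin.pos_iff_nonempty.mp hd
  set R : ℝ := 1 / Real.exp 1 with hRdef
  set S : ℝ≥0∞ := (volume : Measure (EuclideanSpace ℝ (Fin d))).toSphere Set.univ with hSdef
  have hS : S ≠ ∞ := measure_ne_top _ _
  refine ⟨S.toReal ^ 2 + 1, by positivity, ?_⟩
  intro p hp g hg
  set B : Set (EuclideanSpace ℝ (Fin d)) := Metric.ball 0 R with hBdef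
  set w : ℝ → ℝ≥0∞ := fun s => ENNReal.ofReal (s ^ (d - 1)) with hwdef
  have hw : ∀ s, w s ≠ ∞ := fun s => ENNReal.ofReal_ne_top
  -- measurability of auxF
  have hF : Measurable (Function.uncurry (auxF g d p)) := by
    apply Measurable.ite
    · exact measurableSet_lt measurable_const
        ((hg.comp measurable_fst).sub (hg.comp measurable_snd)).abs
    · exact (measurable_const.div
        ((measurable_fst.sub measurable_snd).abs.pow measurable_const)).ennreal_ofReal
    · exact measurable_const
  have hF2 : ∀ r : ℝ, Measurable (auxF g d p r) := fun r =>
    hF.comp (measurable_const.prodMk measurable_id)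
  -- key polar identity
  have key : ∀ G : ℝ → ℝ≥0∞, Measurable G →
      ∫⁻ y in B, G ‖y‖ = S * ∫⁻ s in Set.Ioo 0 R, w s * G s := by
    intro G hG
    have h1 : ∫⁻ y in B, G ‖y‖ = ∫⁻ y : EuclideanSpace ℝ (Fin d),
        ((Set.Iio R).indicator G) ‖y‖ := by
      rw [← lintegral_indicator measurableSet_ball]
      refine lintegral_congr fun y => ?_
      by_cases hy : ‖y‖ < R <;>
        simp [Set.indicator_apply, hBdef, Metric.mem_ball, dist_zero_right, hy]
    rw [h1, lintegral_fun_norm_aux volume _ (hG.indicator measurableSet_Iio),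
      finrank_euclideanSpace_fin]
    congr 1
    have h2 : ∀ s : ℝ, w s * (Set.Iio R).indicator G s
        = (Set.Iio R).indicator (fun s => w s * G s) s := fun s => by
      by_cases hs : s ∈ Set.Iio R <;> simp [Set.indicator_apply, hs]
    rw [lintegral_congr h2, lintegral_indicator measurableSet_Iio,
      Measure.restrict_restrict measurableSet_Iio, Set.Iio_inter_Ioi]
  -- step 1 : pointwise bound
  have step1 : nlI d p 1 (fun x => g ‖x‖) B ≤
      ∫⁻ x in B, ∫⁻ y in B, auxF g d p ‖x‖ ‖y‖ := by
    rw [nlI]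
    refine lintegral_mono fun x => lintegral_mono fun y => ?_
    rw [auxF]
    split_ifs with h
    · have hne : ‖x‖ - ‖y‖ ≠ 0 := by
        intro h0
        rw [sub_eq_zero] at h0
        rw [h0] at h
        norm_num at h
      have hpos : (0:ℝ) < |‖x‖ - ‖y‖| := abs_pos.mpr hne
      refine ENNReal.ofReal_le_ofReal ?_
      rw [Real.one_rpow]
      refine one_div_le_one_div_of_le (Real.rpow_pos_of_pos hpos _) ?_
      exact Real.rpow_le_rpow hpos.le (abs_norm_sub_norm_le x y)
        (by positivity)
    · exact le_rfl
  -- measurability of inner polar integral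
  have hΦ : Measurable (fun r => ∫⁻ s in Set.Ioo (0:ℝ) R, w s * auxF g d p r s) := by
    refine Measurable.lintegral_prod_right ?_
    exact ((measurable_snd.pow_const _).ennreal_ofReal).mul hF
  calc nlI d p 1 (fun x => g ‖x‖) B
      ≤ ∫⁻ x in B, ∫⁻ y in B, auxF g d p ‖x‖ ‖y‖ := step1
    _ = ∫⁻ x in B, S * ∫⁻ s in Set.Ioo 0 R, w s * auxF g d p ‖x‖ s :=
        lintegral_congr fun x => key (auxF g d p ‖x‖) (hF2 _)
    _ = S * ∫⁻ x in B, (fun r => ∫⁻ s in Set.Ioo (0:ℝ) R, w s * auxF g d p r s) ‖x‖ :=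
        lintegral_const_mul' _ _ hS
    _ = S * (S * ∫⁻ r in Set.Ioo 0 R, w r *
          ∫⁻ s in Set.Ioo (0:ℝ) R, w s * auxF g d p r s) := by
        rw [key _ hΦ]
    _ = S * S * ∫⁻ r in Set.Ioo 0 R, ∫⁻ s in Set.Ioo (0:ℝ) R,
          w r * (w s * auxF g d p r s) := by
        rw [← mul_assoc]
        congr 1
        exact lintegral_congr fun r => (lintegral_const_mul' _ _ (hw r)).symm
    _ = S * S * ∫⁻ r₁ in Set.Ioo (0:ℝ) R, ∫⁻ r₂ in Set.Ioo (0:ℝ) R,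
          (if 1 < |g r₁ - g r₂| then
            ENNReal.ofReal (r₁ ^ ((d:ℝ) - 1) * r₂ ^ ((d:ℝ) - 1) / |r₁ - r₂| ^ (p + d))
          else 0) := by
        congr 1
        refine setLIntegral_congr_fun measurableSet_Ioo (
          fun r hr => ?_)
        refine setLIntegral_congr_fun measurableSet_Ioo (
          fun s hs => ?_)
        rw [auxF]
        by_cases h : 1 < |g r - g s|
        · rw [if_pos h, if_pos h, hwdef]
          have hrs : r ≠ s := by
            intro h0; rw [h0] at h; norm_num at h
          have habs : (0:ℝ) < |r - s| := abs_pos.mpr (sub_ne_zero.mpr hrs)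
          rw [← ENNReal.ofReal_mul (pow_nonneg hs.1.le _),
            ← ENNReal.ofReal_mul (pow_nonneg hr.1.le _)]
          congr 1
          rw [← Real.rpow_natCast r (d-1), ← Real.rpow_natCast s (d-1),
            Nat.cast_sub hd, Nat.cast_one, add_comm p (d:ℝ)]
          ring
        · rw [if_neg h, if_neg h, mul_zero, mul_zero]
    _ ≤ ENNReal.ofReal (S.toReal ^ 2 + 1) * _ := by
        refine mul_le_mul_left ?_ _
        calc S * S = ENNReal.ofReal (S.toReal * S.toReal) := by
              rw [← ENNReal.toReal_mul, ENNReal.ofReal_toReal (ENNReal.mul_ne_top hS hS)]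
          _ ≤ _ := ENNReal.ofReal_le_ofReal (by nlinarith [ENNReal.toReal_nonneg (a := S)])
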